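/- Fix π > 0 and define τ1 = ε_e·K³·W_e³·π⁶/T_max², τ2 = B·N0·T_max/G, τ3 = K·π·S/(B·T_max), τ4 = ε_d·K³·W_d³·π⁶/T_max². Let α, β, γ > 0 and set f_e = K·π²·W_e/(α·T_max), f_d = K·π²·W_d/(γ·T_max), and P = (N0·B/G)·(2^{τ3/β} − 1). Then P > 0, the transmission time satisfies T_com = K·π·S/r(P) = β·T_max, the computation times satisfy K·π²·W_e/f_e = α·T_max and K·π²·W_d/f_d = γ·T_max, and the total energy satisfies E_cmp + E_com = τ1/α² + τ2·β·(2^{τ3/β} − 1) + τ4/γ². -/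

import Mathlib

/-- Re-expressing the FAST energy cost via the time-splitting factors
`α, β, γ`: with `f_e = Kπ²W_e/(αT_max)`, `f_d = Kπ²W_d/(γT_max)` and
`P = (N0·B/G)·(2^{τ3/β} − 1)`, one has `P > 0`, `T_com = β·T_max`, the computation
times equal `α·T_max` and `γ·T_max`, and
`E_cmp + E_com = τ1/α² + τ2·β·(2^{τ3/β} − 1) + τ4/γ²`. -/
theorem fast_energy_reparametrization
    (K S We Wd εe εd B N0 Tmax G π : ℝ)
    (hK : 0 < K) (hS : 0 < S) (hWe : 0 < We) (hWd : 0 < Wd)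
    (hεe : 0 < εe) (hεd : 0 < εd) (hB : 0 < B) (hN0 : 0 < N0)
    (hTmax : 0 < Tmax) (hG : 0 < G) (hπ : 0 < π)
    (τ1 τ2 τ3 τ4 : ℝ)
    (hτ1 : τ1 = εe * K ^ 3 * We ^ 3 * π ^ 6 / Tmax ^ 2)
    (hτ2 : τ2 = B * N0 * Tmax / G)
    (hτ3 : τ3 = K * π * S / (B * Tmax))
    (hτ4 : τ4 = εd * K ^ 3 * Wd ^ 3 * π ^ 6 / Tmax ^ 2)
    (α β γ : ℝ) (hα : 0 < α) (hβ : 0 < β) (hγ : 0 < γ)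
    (fe fd P : ℝ)
    (hfe : fe = K * π ^ 2 * We / (α * Tmax))
    (hfd : fd = K * π ^ 2 * Wd / (γ * Tmax))
    (hP : P = (N0 * B / G) * ((2 : ℝ) ^ (τ3 / β) - 1))
    (r Tcom Ecmp Ecom : ℝ)
    (hr : r = B * Real.logb 2 (1 + G * P / (N0 * B)))
    (hTcom : Tcom = K * π * S / r)
    (hEcmp : Ecmp = K * π ^ 2 * (εe * fe ^ 2 * We + εd * fd ^ 2 * Wd))
    (hEcom : Ecom = P * Tcom) :
    0 < P ∧
    Tcom = β * Tmax ∧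
    K * π ^ 2 * We / fe = α * Tmax ∧
    K * π ^ 2 * Wd / fd = γ * Tmax ∧
    Ecmp + Ecom = τ1 / α ^ 2 + τ2 * β * ((2 : ℝ) ^ (τ3 / β) - 1) + τ4 / γ ^ 2 := by

  have hτ3pos : 0 < τ3 / β := by
    apply div_pos _ hβ
    rw [hτ3]; positivity
  have h2 : (1:ℝ) < (2 : ℝ) ^ (τ3 / β) :=
    Real.one_lt_rpow_iff_of_pos (by norm_num) |>.2 (Or.inl ⟨by norm_num, hτ3pos⟩)
  have hPpos : 0 < P := by
    rw [hP]; apply mul_pos (by positivity); linarith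
  have harg : 1 + G * P / (N0 * B) = (2 : ℝ) ^ (τ3 / β) := by
    rw [hP]; field_simp; ring
  have hrval : r = B * (τ3 / β) := by
    rw [hr, harg, Real.logb_rpow (by norm_num)] <;> norm_num
  have hrpos : 0 < r := by rw [hrval]; positivity
  have hTcomval : Tcom = β * Tmax := by
    rw [hTcom, hrval, hτ3]
    field_simp
  refine ⟨hPpos, hTcomval, ?_, ?_, ?_⟩
  · rw [hfe]; field_simp
  · rw [hfd]; field_simp
  · rw [hEcmp, hEcom, hTcomval, hfe, hfd, hP, hτ1, hτ2, hτ4]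
    field_simp
    ring
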